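/- Let L generate a semigroup with Gaussian upper bounds on a domain Ω ⊂ ℝⁿ, and for a ball B and m ∈ ℕ write (I − e^{-r_B²L})^m L^{-1} = ∫₀^∞ g_{r_B,m}(t) e^{-tL} dt. Then for every α > 0 and j ≥ 1, ∫₀^∞ |g_{r_B,m}(t)| e^{-α·4^j r_B²/t} dt/t ≤ C_{m,α}·4^{−jm}. -/

import Mathlib

open MeasureTheory Real

/-- The function `g_{r,m}` with
`(I − e^{-r²L})^m L^{-1} = ∫₀^∞ g_{r,m}(t) e^{-tL} dt`, namely
`g_{r,m}(t) = ∑_{k=0}^m (−1)^k C(m,k) 𝟙_{t > k r²}`. -/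
noncomputable def gFun (r : ℝ) (m : ℕ) (t : ℝ) : ℝ :=
  ∑ k ∈ Finset.range (m + 1),
    (-1 : ℝ) ^ k * (m.choose k : ℝ) * (if (k : ℝ) * r ^ 2 < t then 1 else 0)

lemma gFun_measurable (r : ℝ) (m : ℕ) : Measurable (gFun r m) := by
  apply Finset.measurable_sum
  intro k _
  exact (measurable_const.ite measurableSet_Ioi measurable_const).const_mul _

lemma abs_gFun_le (r : ℝ) (m : ℕ) (t : ℝ) : |gFun r m t| ≤ 2 ^ m := by
  calc |gFun r m t| ≤ ∑ k ∈ Finset.range (m + 1),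
      |(-1 : ℝ) ^ k * (m.choose k : ℝ) * (if (k : ℝ) * r ^ 2 < t then 1 else 0)| :=
        Finset.abs_sum_le_sum_abs _ _
    _ ≤ ∑ k ∈ Finset.range (m + 1), (m.choose k : ℝ) := by
        apply Finset.sum_le_sum
        intro k _
        rw [abs_mul, abs_mul, abs_pow, abs_neg, abs_one, one_pow, one_mul,
          Nat.abs_cast]
        split_ifs <;> simp
    _ = 2 ^ m := by
        rw [← Nat.cast_sum]
        norm_cast
        exact Nat.sum_range_choose m

lemma gFun_eq_zero {r : ℝ} (hr : 0 ≤ r) {m : ℕ} (hm : 1 ≤ m) {t : ℝ}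
    (ht : (m : ℝ) * r ^ 2 < t) : gFun r m t = 0 := by
  have h : ∀ k ∈ Finset.range (m + 1),
      (-1 : ℝ) ^ k * (m.choose k : ℝ) * (if (k : ℝ) * r ^ 2 < t then 1 else 0)
        = (-1 : ℝ) ^ k * 1 ^ (m - k) * (m.choose k : ℝ) := by
    intro k hk
    have hk' : (k : ℝ) ≤ (m : ℝ) := by
      exact_mod_cast Nat.lt_succ_iff.1 (Finset.mem_range.1 hk)
    have : (k : ℝ) * r ^ 2 < t :=
      lt_of_le_of_lt (by nlinarith [sq_nonneg r]) ht
    simp [this]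
  rw [gFun, Finset.sum_congr rfl h, ← add_pow]
  simp only [neg_add_cancel]
  exact zero_pow (by omega)

/-- For every `m ∈ ℕ` and `α > 0` there is `C_{m,α}` such that for all
`r > 0` and all `j ≥ 1`,
`∫₀^∞ |g_{r,m}(t)| e^{-α 4^j r²/t} dt/t ≤ C_{m,α} 4^{-jm}`. -/
theorem gFun_estimate (m : ℕ) (α : ℝ) (hα : 0 < α) :
    ∃ C : ℝ, 0 < C ∧ ∀ (r : ℝ), 0 < r → ∀ j : ℕ, 1 ≤ j →
      (∫ t in Set.Ioi (0 : ℝ),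
          |gFun r m t| * Real.exp (-(α * 4 ^ j * r ^ 2) / t) / t)
        ≤ C * (4 : ℝ) ^ (-(j : ℝ) * m) := by
  rcases Nat.eq_zero_or_pos m with hm | hm
  · -- m = 0 : the integrand is not integrable, so the integral is 0.
    subst hm
    refine ⟨1, one_pos, fun r hr j hj => ?_⟩
    set β : ℝ := α * 4 ^ j * r ^ 2 with hβdef
    have hβ : 0 < β := by positivity
    have hnon : ¬ IntegrableOn
        (fun t => |gFun r 0 t| * Real.exp (-β / t) / t) (Set.Ioi (0 : ℝ)) := by
      intro h
      have h2 : IntegrableOn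
          (fun t => |gFun r 0 t| * Real.exp (-β / t) / t) (Set.Ioi β) :=
        h.mono_set (Set.Ioi_subset_Ioi hβ.le)
      have h3 : IntegrableOn (fun t : ℝ => t⁻¹) (Set.Ioi β) := by
        refine (h2.const_mul (Real.exp 1)).mono
          measurable_inv.aestronglyMeasurable ?_
        rw [ae_restrict_iff' measurableSet_Ioi]
        refine ae_of_all _ fun t ht => ?_
        have htβ : β < t := ht
        have ht0 : 0 < t := hβ.trans htβ
        have hg : gFun r 0 t = 1 := by simp [gFun, ht0]
        have hle : β / t ≤ 1 := (div_le_one ht0).2 htβ.le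
        have hexp : Real.exp (-1) ≤ Real.exp (-β / t) := by
          apply Real.exp_le_exp.2; rw [neg_div]; linarith
        have h1 : Real.exp 1 * Real.exp (-1) = 1 := by
          rw [← Real.exp_add]; norm_num
        have key : t⁻¹ ≤ Real.exp 1 * (Real.exp (-β / t) / t) :=
          calc t⁻¹ = Real.exp 1 * (Real.exp (-1) / t) := by
                rw [← mul_div_assoc, h1, one_div]
            _ ≤ Real.exp 1 * (Real.exp (-β / t) / t) := by gcongr
        rw [Real.norm_eq_abs, Real.norm_eq_abs, abs_of_nonneg (inv_nonneg.2 ht0.le),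
          abs_of_nonneg (by positivity)]
        calc t⁻¹ ≤ Real.exp 1 * (Real.exp (-β / t) / t) := key
          _ = Real.exp 1 * (|gFun r 0 t| * Real.exp (-β / t) / t) := by
              rw [hg, abs_one, one_mul]
      exact not_IntegrableOn_Ioi_inv h3
    rw [integral_undef hnon]
    positivity
  · -- m ≥ 1
    refine ⟨2 ^ m * m.factorial * m ^ m / (m * α ^ m), by positivity,
      fun r hr j hj => ?_⟩
    have hm1 : m - 1 + 1 = m := Nat.succ_pred_eq_of_pos hm
    have hm0 : (0:ℝ) < (m:ℝ) := by exact_mod_cast hm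
    set β : ℝ := α * 4 ^ j * r ^ 2 with hβdef
    have hβ : 0 < β := by positivity
    set M : ℝ := (m:ℝ) * r ^ 2 with hMdef
    have hM : 0 < M := by positivity
    set f : ℝ → ℝ := fun t => |gFun r m t| * Real.exp (-β / t) / t with hfdef
    set K : ℝ := 2 ^ m * m.factorial / β ^ m with hKdef
    have hK : 0 < K := by positivity
    have hfmeas : Measurable f := by
      apply Measurable.div _ measurable_id
      exact (gFun_measurable r m).abs.mul (measurable_const.div measurable_id).exp
    have hfnonneg : ∀ t : ℝ, 0 < t → 0 ≤ f t := fun t ht =>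
      div_nonneg (mul_nonneg (abs_nonneg _) (Real.exp_pos _).le) ht.le
    have hzero : ∀ t ∈ Set.Ioi M, f t = 0 := by
      intro t ht
      have hg : gFun r m t = 0 := gFun_eq_zero hr.le hm ht
      simp [hfdef, hg]
    have hbound : ∀ t ∈ Set.Ioc (0:ℝ) M, f t ≤ K * t ^ (m - 1) := by
      intro t ht
      obtain ⟨ht0, htM⟩ := ht
      have hx : (0:ℝ) ≤ β / t := by positivity
      have hexp : Real.exp (-β / t) ≤ m.factorial * t ^ m / β ^ m := by
        have h1 : (β / t) ^ m / m.factorial ≤ Real.exp (β / t) :=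
          Real.pow_div_factorial_le_exp _ hx m
        have h2 : (0:ℝ) < (β / t) ^ m / m.factorial := by positivity
        calc Real.exp (-β / t) = (Real.exp (β / t))⁻¹ := by
              rw [neg_div, Real.exp_neg]
          _ ≤ ((β / t) ^ m / m.factorial)⁻¹ := inv_anti₀ h2 h1
          _ = m.factorial * t ^ m / β ^ m := by
              rw [div_pow]
              field_simp
      have habs : |gFun r m t| ≤ 2 ^ m := abs_gFun_le r m t
      calc f t ≤ 2 ^ m * (m.factorial * t ^ m / β ^ m) / t := by
            show |gFun r m t| * Real.exp (-β / t) / t ≤ _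
            gcongr <;> first | exact habs | exact hexp | positivity
        _ = K * t ^ (m - 1) := by
            rw [hKdef]
            have hpow : t ^ m = t ^ (m - 1) * t := by rw [← pow_succ, hm1]
            rw [hpow]
            field_simp
    have hsplit : (∫ t in Set.Ioi (0:ℝ), f t) = ∫ t in Set.Ioc (0:ℝ) M, f t := by
      have heq : Set.EqOn f ((Set.Ioc (0:ℝ) M).indicator f) (Set.Ioi 0) := by
        intro t ht
        by_cases h : t ≤ M
        · rw [Set.indicator_of_mem (Set.mem_Ioc.mpr ⟨ht, h⟩)]
        · rw [Set.indicator_of_notMem (fun hc => h (Set.mem_Ioc.mp hc).2), hzero t (lt_of_not_ge h)]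
      rw [setIntegral_congr_fun measurableSet_Ioi heq,
        setIntegral_indicator measurableSet_Ioc,
        Set.inter_eq_right.mpr Set.Ioc_subset_Ioi_self]
    have hpoly : IntegrableOn (fun t : ℝ => K * t ^ (m - 1)) (Set.Ioc 0 M) :=
      (Continuous.integrableOn_Ioc (by continuity))
    have hfint : IntegrableOn f (Set.Ioc (0:ℝ) M) := by
      refine MeasureTheory.Integrable.mono hpoly hfmeas.aestronglyMeasurable ?_
      rw [ae_restrict_iff' measurableSet_Ioc]
      refine ae_of_all _ fun t ht => ?_
      have h1 : 0 ≤ K * t ^ (m - 1) := mul_nonneg hK.le (pow_nonneg ht.1.le _)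
      rw [Real.norm_eq_abs, Real.norm_eq_abs, abs_of_nonneg (hfnonneg t ht.1),
        abs_of_nonneg h1]
      exact hbound t ht
    have hmono : (∫ t in Set.Ioc (0:ℝ) M, f t)
        ≤ ∫ t in Set.Ioc (0:ℝ) M, K * t ^ (m - 1) :=
      setIntegral_mono_on hfint hpoly measurableSet_Ioc hbound
    have hval : (∫ t in Set.Ioc (0:ℝ) M, K * t ^ (m - 1)) = K * (M ^ m / m) := by
      rw [← intervalIntegral.integral_of_le hM.le,
        intervalIntegral.integral_const_mul, integral_pow, hm1,
        zero_pow (by omega), sub_zero,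
        show ((m - 1 : ℕ) : ℝ) + 1 = (m : ℝ) from by exact_mod_cast hm1]
    have h4 : (4:ℝ) ^ (-(j:ℝ) * m) = ((4:ℝ) ^ (j * m : ℕ))⁻¹ := by
      rw [show (-(j:ℝ) * m) = -((j * m : ℕ) : ℝ) by push_cast; ring,
        Real.rpow_neg (by norm_num), Real.rpow_natCast]
    have hfin : K * (M ^ m / m)
        = (2 ^ m * m.factorial * m ^ m / (m * α ^ m)) * ((4:ℝ) ^ (j * m : ℕ))⁻¹ := by
      rw [hKdef, hMdef, hβdef, mul_pow, mul_pow, pow_mul]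
      have h40 : ((4:ℝ) ^ j) ≠ 0 := by positivity
      have hr2 : (r:ℝ) ^ 2 ≠ 0 := by positivity
      field_simp
      ring
    calc (∫ t in Set.Ioi (0:ℝ), f t)
        = ∫ t in Set.Ioc (0:ℝ) M, f t := hsplit
      _ ≤ ∫ t in Set.Ioc (0:ℝ) M, K * t ^ (m - 1) := hmono
      _ = K * (M ^ m / m) := hval
      _ = (2 ^ m * m.factorial * m ^ m / (m * α ^ m)) * ((4:ℝ) ^ (j * m : ℕ))⁻¹ := hfin
      _ = (2 ^ m * m.factorial * m ^ m / (m * α ^ m)) * (4:ℝ) ^ (-(j:ℝ) * m) := by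
          rw [h4]
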